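/- If δ^i ≠ 0 and δ^i is fully sign-consistent with the unified delta model, i.e. δ^i_k·U_k > 0 for every coordinate k with δ^i_k ≠ 0, then its rescaler satisfies λ^i ≤ 1; moreover λ^i = 1 if and only if |U_k| = |δ^i_k| for every k with δ^i_k ≠ 0. -/

import Mathlib

open Filter

theorem stmt8
    (n d : ℕ) (hn : 1 ≤ n) (hd : 1 ≤ d)
    (δ : Fin n → Fin d → ℝ)
    (γ ε U : Fin d → ℝ)
    (hγ : ∀ k, γ k = Real.sign (∑ i, δ i k))
    (hε : ∀ k, γ k ≠ 0 →
      (∃ i, Real.sign (δ i k) = γ k ∧ |δ i k| = ε k) ∧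
      (∀ i, Real.sign (δ i k) = γ k → |δ i k| ≤ ε k))
    (hε0 : ∀ k, γ k = 0 → ε k = 0)
    (hU : ∀ k, U k = γ k * ε k)
    (M : Fin n → Fin d → ℝ)
    (hM : ∀ i k, M i k = if 0 < δ i k * U k then 1 else 0)
    (lam : Fin n → ℝ)
    (hden : ∀ i, ∑ k, |M i k * U k| ≠ 0)
    (hlam : ∀ i, lam i = (∑ k, |δ i k|) / (∑ k, |M i k * U k|)) :
    ∀ i : Fin n, δ i ≠ 0 → (∀ k, δ i k ≠ 0 → 0 < δ i k * U k) →
      lam i ≤ 1 ∧ (lam i = 1 ↔ ∀ k, δ i k ≠ 0 → |U k| = |δ i k|) := by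
  intro i hne hpos
  -- key termwise bound
  have key : ∀ k, δ i k ≠ 0 → |δ i k| ≤ |U k| := by
    intro k hk0
    have hk := hpos k hk0
    have hUk : U k ≠ 0 := by
      intro h0; rw [h0, mul_zero] at hk; exact lt_irrefl 0 hk
    have hγk : γ k ≠ 0 := by
      intro h0; rw [hU k, h0, zero_mul] at hUk; exact hUk rfl
    obtain ⟨⟨j, hjs, hje⟩, hall⟩ := hε k hγk
    have hεpos : 0 < ε k := by
      rcases lt_or_eq_of_le (abs_nonneg (δ j k)) with h | h
      · rw [hje] at h; exact h
      · exfalso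
        have : δ j k = 0 := by
          have := h.symm; rwa [abs_eq_zero] at this
        rw [this, Real.sign_zero] at hjs; exact hγk hjs.symm
    have hγval : γ k = 1 ∨ γ k = -1 := by
      rw [hγ k]
      rcases lt_trichotomy (∑ a, δ a k) 0 with h | h | h
      · right; exact Real.sign_of_neg h
      · exfalso; apply hγk; rw [hγ k, h, Real.sign_zero]
      · left; exact Real.sign_of_pos h
    have habsU : |U k| = ε k := by
      rw [hU k, abs_mul, abs_of_pos hεpos]
      rcases hγval with h | h <;> simp [h]
    rw [habsU]
    apply hall
    rcases hγval with h | h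
    · have hUpos : 0 < U k := by rw [hU k, h, one_mul]; exact hεpos
      have : 0 < δ i k := mul_pos_iff.mp hk |>.elim (fun h => h.1)
        (fun h => absurd hUpos (not_lt.mpr h.2.le))
      rw [h]; exact Real.sign_of_pos this
    · have hUneg : U k < 0 := by
        rw [hU k, h]; simpa using neg_neg_of_pos hεpos
      have : δ i k < 0 := by
        rcases mul_pos_iff.mp hk with ⟨h1, h2⟩ | ⟨h1, h2⟩
        · exact absurd hUneg (not_lt.mpr h2.le)
        · exact h1
      rw [h]; exact Real.sign_of_neg this
  have term : ∀ k, |δ i k| ≤ |M i k * U k| := by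
    intro k
    by_cases h : δ i k = 0
    · simp [h]; positivity
    · have hM1 : M i k = 1 := by rw [hM]; simp [hpos k h]
      rw [hM1, one_mul]; exact key k h
  have hsumle : ∑ k, |δ i k| ≤ ∑ k, |M i k * U k| :=
    Finset.sum_le_sum fun k _ => term k
  have hdpos : 0 < ∑ k, |M i k * U k| :=
    lt_of_le_of_ne (Finset.sum_nonneg fun k _ => abs_nonneg _) (Ne.symm (hden i))
  constructor
  · rw [hlam i, div_le_one hdpos]; exact hsumle
  · rw [hlam i, div_eq_one_iff_eq (hden i)]
    constructor
    · intro hsum k hk0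
      have := (Finset.sum_eq_sum_iff_of_le (fun k _ => term k)).mp hsum k (Finset.mem_univ k)
      have hM1 : M i k = 1 := by rw [hM]; simp [hpos k hk0]
      rw [hM1, one_mul] at this
      exact this.symm
    · intro h
      apply Finset.sum_congr rfl
      intro k _
      by_cases hk0 : δ i k = 0
      · have hM0 : M i k = 0 := by
          rw [hM]; simp [hk0]
        simp [hk0, hM0]
      · have hM1 : M i k = 1 := by rw [hM]; simp [hpos k hk0]
        rw [hM1, one_mul, h k hk0]
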